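/- Let X be exponential(1), V exponential(2), independent, and g1 = (ρ^r-1)/ρ, g2 = (ρ^{2r}-1)/ρ. Then P(X + V < g2 | X < g1) = (e^{-2g2} - e^{-g1} - e^{-2g2+g1} + 1)/(1 - e^{-g1}), and for 0 < r < 1/2 this is exponentially equal to ρ^{2r-1} as ρ→∞. -/

import Mathlib

open MeasureTheory ProbabilityTheory Filter Real Set


lemma aux_map_eq_expMeasure {Ω : Type*} [MeasurableSpace Ω] (μ : Measure Ω)
    [IsProbabilityMeasure μ] (W : Ω → ℝ) (hW : Measurable W) (c : ℝ) (hc : 0 < c)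
    (ht : ∀ x : ℝ, 0 ≤ x → μ {ω | x < W ω} = ENNReal.ofReal (Real.exp (-(c*x)))) :
    Measure.map W μ = expMeasure c := by
  have hiic : ∀ x : ℝ, μ {ω | W ω ≤ x} = ENNReal.ofReal (if 0 ≤ x then 1 - exp (-(c*x)) else 0) := by
    intro x
    rcases le_or_gt 0 x with hx | hx
    · rw [if_pos hx]
      have hcompl : {ω | W ω ≤ x} = {ω | x < W ω}ᶜ := by ext ω; simp
      rw [hcompl, measure_compl (by exact measurableSet_lt measurable_const hW) (measure_ne_top _ _),
        ht x hx, measure_univ]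
      rw [← ENNReal.ofReal_one, ← ENNReal.ofReal_sub _ (exp_pos _).le]
    · rw [if_neg (not_le.mpr hx)]
      have h0 : μ {ω | 0 < W ω} = 1 := by rw [ht 0 le_rfl]; simp
      have hsub : {ω | W ω ≤ x} ⊆ {ω | 0 < W ω}ᶜ := by
        intro ω hω; simp only [mem_setOf_eq, mem_compl_iff, not_lt] at *; linarith
      have : μ {ω | 0 < W ω}ᶜ = 0 := by
        rw [measure_compl (measurableSet_lt measurable_const hW) (measure_ne_top _ _), h0,
          measure_univ, tsub_self]
      simp [le_antisymm (le_trans (measure_mono hsub) this.le) zero_le]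
  have : IsProbabilityMeasure (Measure.map W μ) := Measure.isProbabilityMeasure_map hW.aemeasurable
  refine Measure.ext_of_Iic _ _ (fun x => ?_)
  rw [Measure.map_apply hW measurableSet_Iic]
  show μ {ω | W ω ≤ x} = _
  rw [hiic x, expMeasure, gammaMeasure, withDensity_apply _ measurableSet_Iic]
  exact (lintegral_exponentialPDF_eq_antiDeriv hc x).symm



lemma aux_expMeasure_Iio {c : ℝ} (hc : 0 < c) (y : ℝ) :
    expMeasure c (Iio y) = ENNReal.ofReal (if 0 ≤ y then 1 - exp (-(c*y)) else 0) := by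
  have h1 : expMeasure c {y} = 0 :=
    withDensity_absolutelyContinuous _ _ (measure_singleton y)
  have h2 : expMeasure c (Iio y) = expMeasure c (Iic y) := measure_congr (Iio_ae_eq_Iic' h1)
  rw [h2, expMeasure, gammaMeasure, withDensity_apply _ measurableSet_Iic]
  exact lintegral_exponentialPDF_eq_antiDeriv hc y

lemma aux_integral_eval {a c : ℝ} (ha : 0 ≤ a) :
    ∫ x in (0:ℝ)..a, exp (-x) * (1 - exp (-(2*(c-x)))) =
      exp (-2*c) - exp (-a) - exp (-2*c + a) + 1 := by
  have key : ∀ x ∈ uIcc (0:ℝ) a, HasDerivAt (fun x => -exp (-x) - exp (-2*c + x))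
      (exp (-x) * (1 - exp (-(2*(c-x))))) x := by
    intro x _
    have h1 : HasDerivAt (fun x : ℝ => -exp (-x) - exp (-2*c + x))
        (-(exp (-x) * (-1)) - exp (-2*c + x)) x := by
      have d1 : HasDerivAt (fun x : ℝ => exp (-x)) (exp (-x) * (-1)) x :=
        (hasDerivAt_neg x).exp
      have d2 : HasDerivAt (fun x : ℝ => exp (-2*c + x)) (exp (-2*c + x) * 1) x :=
        ((hasDerivAt_id x).const_add (-2*c)).exp
      exact (d1.neg.sub d2).congr_deriv (by ring)
    convert h1 using 1
    have : exp (-x) * exp (-(2*(c-x))) = exp (-2*c + x) := by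
      rw [← Real.exp_add]; ring_nf
    nlinarith [this]
  have hint : IntervalIntegrable (fun x => exp (-x) * (1 - exp (-(2*(c-x))))) volume 0 a := by
    apply Continuous.intervalIntegrable
    continuity
  rw [intervalIntegral.integral_eq_sub_of_hasDerivAt key hint]
  ring_nf
  simp [Real.exp_zero]
  ring_nf




lemma aux_joint {Ω : Type*} [MeasurableSpace Ω] (μ : Measure Ω) [IsProbabilityMeasure μ]
    (X V : Ω → ℝ) (hX : Measurable X) (hV : Measurable V) (hXV : IndepFun X V μ)
    (hmX : Measure.map X μ = expMeasure 1) (hmV : Measure.map V μ = expMeasure 2)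
    (a c : ℝ) (ha : 0 ≤ a) (hac : a ≤ c) :
    μ ({ω | X ω + V ω < c} ∩ {ω | X ω < a}) =
      ENNReal.ofReal (exp (-2*c) - exp (-a) - exp (-2*c + a) + 1) := by
  set S : Set (ℝ × ℝ) := {p : ℝ × ℝ | p.1 + p.2 < c} ∩ {p : ℝ × ℝ | p.1 < a} with hS
  have hSm : MeasurableSet S :=
    (measurableSet_lt (measurable_fst.add measurable_snd) measurable_const).inter
      (measurableSet_lt measurable_fst measurable_const)
  have hprod : μ.map (fun ω => (X ω, V ω)) = (expMeasure 1).prod (expMeasure 2) := by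
    rw [← hmX, ← hmV]
    exact (indepFun_iff_map_prod_eq_prod_map_map hX.aemeasurable hV.aemeasurable).mp hXV
  have hpre : (fun ω => (X ω, V ω)) ⁻¹' S = {ω | X ω + V ω < c} ∩ {ω | X ω < a} := rfl
  haveI : IsProbabilityMeasure (expMeasure 2) := isProbabilityMeasure_expMeasure (by norm_num)
  rw [← hpre, ← Measure.map_apply (hX.prodMk hV) hSm, hprod, Measure.prod_apply hSm]
  have hslice : ∀ x : ℝ, expMeasure 2 (Prod.mk x ⁻¹' S) =
      Set.indicator (Iio a) (fun x => ENNReal.ofReal (1 - exp (-(2*(c-x))))) x := by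
    intro x
    rcases lt_or_ge x a with hx | hx
    · have : Prod.mk x ⁻¹' S = Iio (c - x) := by
        ext v; simp only [hS, Set.mem_preimage, Set.mem_inter_iff, Set.mem_setOf_eq,
          Set.mem_Iio, hx, and_true]
        constructor <;> intro h <;> linarith
      rw [this, aux_expMeasure_Iio (by norm_num), Set.indicator_of_mem (Set.mem_Iio.mpr hx),
        if_pos (by linarith)]
    · have : Prod.mk x ⁻¹' S = ∅ := by
        ext v; simp only [hS, Set.mem_preimage, Set.mem_inter_iff, Set.mem_setOf_eq,
          Set.mem_empty_iff_false, iff_false, not_and, not_lt]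
        intro; linarith
      rw [this, measure_empty, Set.indicator_of_notMem (by simpa using hx)]
  rw [lintegral_congr hslice, lintegral_indicator measurableSet_Iio]
  have hgm : Measurable (fun x : ℝ => ENNReal.ofReal (1 - exp (-(2*(c-x))))) := by
    apply ENNReal.measurable_ofReal.comp
    fun_prop
  have hfm : Measurable (exponentialPDF 1) := (measurable_exponentialPDFReal 1).ennreal_ofReal
  rw [show expMeasure 1 = volume.withDensity (exponentialPDF 1) from rfl,
    setLIntegral_withDensity_eq_setLIntegral_mul _ hfm hgm measurableSet_Iio]
  rw [← Set.Iio_union_Ico_eq_Iio ha,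
    lintegral_union measurableSet_Ico
      ((Set.Iio_disjoint_Ici le_rfl).mono_right Set.Ico_subset_Ici_self)]
  have h0 : ∫⁻ x in Iio (0:ℝ), ((exponentialPDF 1) * fun x => ENNReal.ofReal (1 - exp (-(2*(c-x))))) x = 0 := by
    have hae : ∀ᵐ x ∂(volume.restrict (Iio (0:ℝ))),
        ((exponentialPDF 1) * fun x => ENNReal.ofReal (1 - exp (-(2*(c-x))))) x = 0 := by
      rw [ae_restrict_iff' measurableSet_Iio]
      exact ae_of_all _ fun x hx => by simp [exponentialPDF_of_neg hx]
    rw [lintegral_congr_ae hae, lintegral_zero]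
  rw [h0, zero_add]
  have heq : ∫⁻ x in Ico (0:ℝ) a, ((exponentialPDF 1) * fun x => ENNReal.ofReal (1 - exp (-(2*(c-x))))) x
      = ∫⁻ x in Ico (0:ℝ) a, ENNReal.ofReal (exp (-x) * (1 - exp (-(2*(c-x))))) := by
    apply setLIntegral_congr_fun measurableSet_Ico
    intro x hx
    rw [Pi.mul_apply, exponentialPDF_of_nonneg hx.1, ← ENNReal.ofReal_mul (by positivity)]
    norm_num
  rw [heq]
  rw [← ofReal_integral_eq_lintegral_ofReal]
  · rw [MeasureTheory.integral_Ico_eq_integral_Ioo, ← MeasureTheory.integral_Ioc_eq_integral_Ioo,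
      ← intervalIntegral.integral_of_le ha, aux_integral_eval ha]
  · exact (Continuous.integrableOn_Icc (by fun_prop)).mono_set Ico_subset_Icc_self
  · rw [Filter.EventuallyLE, ae_restrict_iff' measurableSet_Ico]
    refine ae_of_all _ fun x hx => ?_
    show (0:ℝ) ≤ exp (-x) * (1 - exp (-(2*(c-x))))
    have h1 : exp (-(2*(c-x))) ≤ 1 := exp_le_one_iff.mpr (by nlinarith [hx.2])
    have h2 : (0:ℝ) ≤ exp (-x) := (exp_pos _).le
    nlinarith



lemma aux_tendsto (r : ℝ) (hr0 : 0 < r) (hr : r < 1/2) (g1 g2 P : ℝ → ℝ)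
    (hg1 : ∀ ρ : ℝ, g1 ρ = (ρ ^ r - 1) / ρ)
    (hg2 : ∀ ρ : ℝ, g2 ρ = (ρ ^ (2*r) - 1) / ρ)
    (hPeq : ∀ ρ : ℝ, 1 < ρ → P ρ = 1 - exp (g1 ρ - 2 * g2 ρ)) :
    Tendsto (fun ρ : ℝ => Real.log (P ρ) / Real.log ρ) atTop (nhds (2*r - 1)) := by
  have key : ∀ ρ : ℝ, 1 < ρ → 2 ≤ ρ ^ r → 2 * g2 ρ - g1 ρ ≤ 1 →
      2*r - 1 - Real.log 2 / Real.log ρ ≤ Real.log (P ρ) / Real.log ρ ∧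
      Real.log (P ρ) / Real.log ρ ≤ 2*r - 1 + Real.log 2 / Real.log ρ := by
    intro ρ hρ hs htle'
    obtain ⟨T, hT⟩ : ∃ T : ℝ, T = 2 * g2 ρ - g1 ρ := ⟨_, rfl⟩
    have htle : T ≤ 1 := hT ▸ htle'
    have hρ0 : 0 < ρ := by linarith
    have hsq : ρ ^ (2*r) = (ρ ^ r)^2 := by
      rw [show 2*r = r*2 by ring, Real.rpow_mul hρ0.le, Real.rpow_two]
    have hpow : ρ ^ (2*r - 1) = ρ ^ (2*r) / ρ := by
      rw [Real.rpow_sub hρ0, Real.rpow_one]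
    have htval : T = (2 * ρ ^ (2*r) - ρ ^ r - 1) / ρ := by
      rw [hT]; simp only [hg1, hg2]; field_simp; ring
    have hlow : ρ ^ (2*r - 1) ≤ T := by
      rw [htval, hpow, hsq]
      gcongr
      nlinarith
    have hup : T ≤ 2 * ρ ^ (2*r - 1) := by
      rw [htval, hpow, hsq]
      rw [div_le_iff₀ hρ0, mul_comm (2:ℝ), mul_assoc, div_mul_cancel₀ _ hρ0.ne']
      nlinarith
    have ht0 : 0 < T := lt_of_lt_of_le (Real.rpow_pos_of_pos hρ0 _) hlow
    have hPρ : P ρ = 1 - exp (-T) := by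
      rw [hPeq ρ hρ]; congr 1; rw [hT]; ring_nf
    have hP0 : 0 < P ρ := by
      rw [hPρ]; have := Real.exp_lt_one_iff.mpr (by linarith : -T < 0); linarith
    have hPle : P ρ ≤ T := by
      rw [hPρ]; have := Real.add_one_le_exp (-T); linarith
    have hPge : T / 2 ≤ P ρ := by
      rw [hPρ]
      have h1 : exp (-T) ≤ 1 / (1 + T) := by
        rw [Real.exp_neg, inv_eq_one_div, div_le_div_iff₀ (Real.exp_pos _) (by linarith)]
        nlinarith [Real.add_one_le_exp T]
      have h2 : 1 / (1 + T) ≤ 1 - T / 2 := by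
        rw [div_le_iff₀ (by linarith : (0:ℝ) < 1 + T)]
        nlinarith [mul_nonneg ht0.le (sub_nonneg.mpr htle)]
      linarith
    have hlogρ : 0 < Real.log ρ := Real.log_pos hρ
    have hub : Real.log (P ρ) ≤ Real.log 2 + (2*r - 1) * Real.log ρ := by
      have : Real.log (P ρ) ≤ Real.log (2 * ρ ^ (2*r-1)) :=
        Real.log_le_log hP0 (hPle.trans hup)
      rwa [Real.log_mul (by norm_num) (Real.rpow_pos_of_pos hρ0 _).ne',
        Real.log_rpow hρ0] at this
    have hlb : (2*r - 1) * Real.log ρ - Real.log 2 ≤ Real.log (P ρ) := by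
      have h3 : ρ ^ (2*r-1) / 2 ≤ P ρ := by
        refine le_trans ?_ hPge
        linarith
      have : Real.log (ρ ^ (2*r-1) / 2) ≤ Real.log (P ρ) :=
        Real.log_le_log (by positivity) h3
      rwa [Real.log_div (Real.rpow_pos_of_pos hρ0 _).ne' (by norm_num),
        Real.log_rpow hρ0] at this
    constructor
    · rw [le_div_iff₀ hlogρ]
      have h4 : (2*r - 1 - Real.log 2 / Real.log ρ) * Real.log ρ
          = (2*r-1) * Real.log ρ - Real.log 2 := by field_simp
      rw [h4]; exact hlb
    · rw [div_le_iff₀ hlogρ]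
      have h4 : (2*r - 1 + Real.log 2 / Real.log ρ) * Real.log ρ
          = Real.log 2 + (2*r-1) * Real.log ρ := by field_simp; ring
      rw [h4]; exact hub
  have E1 : ∀ᶠ ρ : ℝ in atTop, 1 < ρ := eventually_gt_atTop 1
  have E2 : ∀ᶠ ρ : ℝ in atTop, 2 ≤ ρ ^ r := (tendsto_rpow_atTop hr0).eventually_ge_atTop 2
  have E3 : ∀ᶠ ρ : ℝ in atTop, 2 * g2 ρ - g1 ρ ≤ 1 := by
    have h2 : Tendsto (fun ρ : ℝ => 2 * ρ ^ (-(1 - 2*r))) atTop (nhds (2 * 0)) :=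
      (tendsto_rpow_neg_atTop (by linarith)).const_mul 2
    have h2' : Tendsto (fun ρ : ℝ => 2 * ρ ^ (2*r - 1)) atTop (nhds 0) := by
      simpa [show -(1 - 2*r) = 2*r - 1 by ring] using h2
    have h3 := h2'.eventually_lt_const (by norm_num : (0:ℝ) < 1)
    filter_upwards [E1, E2, h3] with ρ hρ hs h1
    have hρ0 : 0 < ρ := by linarith
    have hsq : ρ ^ (2*r) = (ρ ^ r)^2 := by
      rw [show 2*r = r*2 by ring, Real.rpow_mul hρ0.le, Real.rpow_two]
    have hpow : ρ ^ (2*r - 1) = ρ ^ (2*r) / ρ := by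
      rw [Real.rpow_sub hρ0, Real.rpow_one]
    have htval : 2 * g2 ρ - g1 ρ = (2 * ρ ^ (2*r) - ρ ^ r - 1) / ρ := by
      simp only [hg1, hg2]; field_simp; ring
    have hup : 2 * g2 ρ - g1 ρ ≤ 2 * ρ ^ (2*r - 1) := by
      rw [htval, hpow, hsq]
      rw [div_le_iff₀ hρ0, mul_comm (2:ℝ), mul_assoc, div_mul_cancel₀ _ hρ0.ne']
      nlinarith
    linarith
  have hlim : Tendsto (fun ρ : ℝ => Real.log 2 / Real.log ρ) atTop (nhds 0) :=
    tendsto_const_nhds.div_atTop Real.tendsto_log_atTop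
  have hlo : Tendsto (fun ρ : ℝ => 2*r - 1 - Real.log 2 / Real.log ρ) atTop (nhds (2*r - 1)) := by
    simpa using tendsto_const_nhds.sub hlim
  have hhi : Tendsto (fun ρ : ℝ => 2*r - 1 + Real.log 2 / Real.log ρ) atTop (nhds (2*r - 1)) := by
    simpa using tendsto_const_nhds.add hlim
  refine tendsto_of_tendsto_of_tendsto_of_le_of_le' hlo hhi ?_ ?_
  · filter_upwards [E1, E2, E3] with ρ h1 h2 h3
    exact (key ρ h1 h2 h3).1
  · filter_upwards [E1, E2, E3] with ρ h1 h2 h3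
    exact (key ρ h1 h2 h3).2


/-- For independent `X ~ exponential(1)` and `V ~ exponential(2)`, with
`g1 = (ρ^r-1)/ρ` and `g2 = (ρ^{2r}-1)/ρ`:
`P(X+V < g2 | X < g1) = (e^{-2g2} - e^{-g1} - e^{-2g2+g1} + 1)/(1 - e^{-g1})`,
and for `0 < r < 1/2` this is exponentially equal to `ρ^{2r-1}`. -/
theorem stmt7 {Ω : Type*} [MeasurableSpace Ω] (μ : Measure Ω) [IsProbabilityMeasure μ]
    (X V : Ω → ℝ) (hX : Measurable X) (hV : Measurable V)
    (hXV : IndepFun X V μ)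
    (htX : ∀ x : ℝ, 0 ≤ x → μ {ω | x < X ω} = ENNReal.ofReal (Real.exp (-x)))
    (htV : ∀ x : ℝ, 0 ≤ x → μ {ω | x < V ω} = ENNReal.ofReal (Real.exp (-2 * x)))
    (r : ℝ) (hr0 : 0 < r) (hr : r < 1/2)
    (g1 g2 : ℝ → ℝ)
    (hg1 : ∀ ρ : ℝ, g1 ρ = (ρ ^ r - 1) / ρ)
    (hg2 : ∀ ρ : ℝ, g2 ρ = (ρ ^ (2*r) - 1) / ρ)
    (P : ℝ → ℝ)
    (hP : ∀ ρ : ℝ, P ρ =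
      (μ ({ω | X ω + V ω < g2 ρ} ∩ {ω | X ω < g1 ρ})).toReal
        / (μ {ω | X ω < g1 ρ}).toReal) :
    (∀ ρ : ℝ, 1 < ρ →
      P ρ = (Real.exp (-2 * g2 ρ) - Real.exp (-(g1 ρ))
              - Real.exp (-2 * g2 ρ + g1 ρ) + 1) / (1 - Real.exp (-(g1 ρ)))) ∧
    Tendsto (fun ρ : ℝ => Real.log (P ρ) / Real.log ρ) atTop (nhds (2*r - 1)) := by
  have hmX : Measure.map X μ = expMeasure 1 :=
    aux_map_eq_expMeasure μ X hX 1 one_pos (by intro x hx; rw [htX x hx]; norm_num)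
  have hmV : Measure.map V μ = expMeasure 2 :=
    aux_map_eq_expMeasure μ V hV 2 two_pos (by intro x hx; rw [htV x hx]; ring_nf)
  have hmarg : ∀ a : ℝ, 0 ≤ a → μ {ω | X ω < a} = ENNReal.ofReal (1 - exp (-a)) := by
    intro a ha
    have hpre : {ω | X ω < a} = X ⁻¹' (Iio a) := rfl
    rw [hpre, ← Measure.map_apply hX measurableSet_Iio, hmX, aux_expMeasure_Iio one_pos,
      if_pos ha]
    norm_num
  have hfact : ∀ a c : ℝ, 0 ≤ a → a ≤ c → 0 ≤ c →
      exp (-2*c) - exp (-a) - exp (-2*c + a) + 1 = (1 - exp (-a)) * (1 - exp (-2*c + a)) := by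
    intro a c ha hac hc
    have h := Real.exp_add (-a) (-2*c + a)
    have h2 : -a + (-2*c + a) = -2*c := by ring
    rw [h2] at h
    nlinarith [h]
  have part1 : ∀ ρ : ℝ, 1 < ρ →
      P ρ = (Real.exp (-2 * g2 ρ) - Real.exp (-(g1 ρ))
              - Real.exp (-2 * g2 ρ + g1 ρ) + 1) / (1 - Real.exp (-(g1 ρ))) := by
    intro ρ hρ
    have hρ0 : 0 < ρ := by linarith
    have hs1 : 1 < ρ ^ r := (Real.one_lt_rpow_iff_of_pos hρ0).mpr (Or.inl ⟨hρ, hr0⟩)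
    have hs2 : 1 < ρ ^ (2*r) := (Real.one_lt_rpow_iff_of_pos hρ0).mpr (Or.inl ⟨hρ, by linarith⟩)
    have ha : 0 ≤ g1 ρ := by rw [hg1]; exact div_nonneg (by linarith) hρ0.le
    have hc : 0 ≤ g2 ρ := by rw [hg2]; exact div_nonneg (by linarith) hρ0.le
    have hac : g1 ρ ≤ g2 ρ := by
      have hmono : ρ ^ r ≤ ρ ^ (2*r) := (Real.rpow_le_rpow_left_iff hρ).mpr (by linarith)
      rw [hg1, hg2, div_le_div_iff₀ hρ0 hρ0]
      nlinarith
    have hjoint := aux_joint μ X V hX hV hXV hmX hmV (g1 ρ) (g2 ρ) ha hac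
    have hnum : 0 ≤ exp (-2 * g2 ρ) - exp (-(g1 ρ)) - exp (-2 * g2 ρ + g1 ρ) + 1 := by
      have := hfact (g1 ρ) (g2 ρ) ha hac hc
      have hu : exp (-(g1 ρ)) ≤ 1 := Real.exp_le_one_iff.mpr (by linarith)
      have hw : exp (-2 * g2 ρ + g1 ρ) ≤ 1 := Real.exp_le_one_iff.mpr (by linarith)
      nlinarith [this]
    have hden : (0:ℝ) ≤ 1 - exp (-(g1 ρ)) := by
      have := Real.exp_le_one_iff.mpr (by linarith : -(g1 ρ) ≤ 0); linarith
    rw [hP ρ, hjoint, hmarg (g1 ρ) ha, ENNReal.toReal_ofReal (by exact_mod_cast hnum),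
      ENNReal.toReal_ofReal hden]
  have hPeq : ∀ ρ : ℝ, 1 < ρ → P ρ = 1 - exp (g1 ρ - 2 * g2 ρ) := by
    intro ρ hρ
    have hρ0 : 0 < ρ := by linarith
    have hs1 : 1 < ρ ^ r := (Real.one_lt_rpow_iff_of_pos hρ0).mpr (Or.inl ⟨hρ, hr0⟩)
    have hs2 : 1 < ρ ^ (2*r) := (Real.one_lt_rpow_iff_of_pos hρ0).mpr (Or.inl ⟨hρ, by linarith⟩)
    have ha : 0 < g1 ρ := by rw [hg1]; exact div_pos (by linarith) hρ0
    have hc : 0 ≤ g2 ρ := by rw [hg2]; exact div_nonneg (by linarith) hρ0.le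
    have hac : g1 ρ ≤ g2 ρ := by
      have hmono : ρ ^ r ≤ ρ ^ (2*r) := (Real.rpow_le_rpow_left_iff hρ).mpr (by linarith)
      rw [hg1, hg2, div_le_div_iff₀ hρ0 hρ0]
      nlinarith
    have hden : (0:ℝ) < 1 - exp (-(g1 ρ)) := by
      have := Real.exp_lt_one_iff.mpr (by linarith : -(g1 ρ) < 0); linarith
    rw [part1 ρ hρ, hfact (g1 ρ) (g2 ρ) ha.le hac hc, mul_comm,
      mul_div_assoc, div_self hden.ne', mul_one]
    congr 1
    ring
  exact ⟨part1, aux_tendsto r hr0 hr g1 g2 P hg1 hg2 hPeq⟩
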